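/- For k ∈ {1, 2}, in every finite simple undirected connected graph G, no pessimistic player with k-local information is unhappy with respect to the SUM-cost; consequently every finite simple undirected connected graph is a sum-swap equilibrium for pessimistic players with k-local information. -/
import Mathlib


open SimpleGraph

namespace SwapGame

/-- The set of vertices within distance `k` of `u` in `G` (the `k`-neighborhood). -/
def ball {V : Type} (G : SimpleGraph V) (u : V) (k : ℕ) : Set V :=
  {v | G.edist u v ≤ (k : ℕ∞)}

/-- The graph obtained from `G` by the edge swap `(v, w)` at `u`:
remove the edge `{u, v}` and add the edge `{u, w}`. -/
def swapGraph {V : Type} (G : SimpleGraph V) (u v w : V) : SimpleGraph V :=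
  SimpleGraph.fromEdgeSet ((G.edgeSet \ {s(u, v)}) ∪ {s(u, w)})

/-- The edge swap `(v, w)` at `u` is a legal move for a player with `k`-local information:
`v` is a neighbor of `u` and `w` is a non-neighbor (other than `u`) within distance `k`. -/
def ValidSwap {V : Type} (G : SimpleGraph V) (k : ℕ) (u v w : V) : Prop :=
  G.Adj u v ∧ G.edist u w ≤ (k : ℕ∞) ∧ ¬ G.Adj u w ∧ w ≠ u

/-- `H` (a graph on `W`, with `ι` identifying the view inside `H`) is a finite connected
graph compatible with `u`'s `k`-local view in `G`. -/
def Compatible {V : Type} (G : SimpleGraph V) (k : ℕ) (u : V)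
    {W : Type} (H : SimpleGraph W) (ι : V → W) : Prop :=
  Finite W ∧ H.Connected ∧ Set.InjOn ι (ball G u k) ∧
  {x : W | H.edist (ι u) x ≤ (k : ℕ∞)} = ι '' ball G u k ∧
  ∀ a ∈ ball G u k, ∀ b ∈ ball G u k, (H.Adj (ι a) (ι b) ↔ G.Adj a b)

/-- SUM-cost of player `u` in `H` (`⊤` when `H` is disconnected). -/
noncomputable def cSum {W : Type} (H : SimpleGraph W) (u : W) : ℕ∞ :=
  ∑' v, H.edist u v

/-- MAX-cost (eccentricity) of player `u` in `H` (`⊤` when `H` is disconnected). -/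
noncomputable def cMax {W : Type} (H : SimpleGraph W) (u : W) : ℕ∞ :=
  ⨆ v, H.edist u v

/-- A pessimistic player `u` with `k`-local information is unhappy in `G` w.r.t. the
SUM-cost via the edge swap `(v, w)`: the swap strictly decreases `u`'s cost in every
compatible global graph. -/
def UnhappySumVia {V : Type} (G : SimpleGraph V) (k : ℕ) (u v w : V) : Prop :=
  ValidSwap G k u v w ∧
  ∀ (W : Type) (H : SimpleGraph W) (ι : V → W), Compatible G k u H ι →
    cSum (swapGraph H (ι u) (ι v) (ι w)) (ι u) < cSum H (ι u)

/-- Pessimistic unhappiness w.r.t. the MAX-cost via the edge swap `(v, w)`. -/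
def UnhappyMaxVia {V : Type} (G : SimpleGraph V) (k : ℕ) (u v w : V) : Prop :=
  ValidSwap G k u v w ∧
  ∀ (W : Type) (H : SimpleGraph W) (ι : V → W), Compatible G k u H ι →
    cMax (swapGraph H (ι u) (ι v) (ι w)) (ι u) < cMax H (ι u)

/-- Weakly pessimistic unhappiness w.r.t. the SUM-cost via the edge swap `(v, w)`:
the swap does not increase `u`'s cost in any compatible global graph. -/
def WeakUnhappySumVia {V : Type} (G : SimpleGraph V) (k : ℕ) (u v w : V) : Prop :=
  ValidSwap G k u v w ∧
  ∀ (W : Type) (H : SimpleGraph W) (ι : V → W), Compatible G k u H ι →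
    cSum (swapGraph H (ι u) (ι v) (ι w)) (ι u) ≤ cSum H (ι u)

/-- Weakly pessimistic unhappiness w.r.t. the MAX-cost via the edge swap `(v, w)`. -/
def WeakUnhappyMaxVia {V : Type} (G : SimpleGraph V) (k : ℕ) (u v w : V) : Prop :=
  ValidSwap G k u v w ∧
  ∀ (W : Type) (H : SimpleGraph W) (ι : V → W), Compatible G k u H ι →
    cMax (swapGraph H (ι u) (ι v) (ι w)) (ι u) ≤ cMax H (ι u)

/-- Optimistic unhappiness w.r.t. the SUM-cost via the edge swap `(v, w)`:
the swap strictly decreases `u`'s cost in some compatible global graph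
(with the swapped graph connected). -/
def OptUnhappySumVia {V : Type} (G : SimpleGraph V) (k : ℕ) (u v w : V) : Prop :=
  ValidSwap G k u v w ∧
  ∃ (W : Type) (H : SimpleGraph W) (ι : V → W), Compatible G k u H ι ∧
    (swapGraph H (ι u) (ι v) (ι w)).Connected ∧
    cSum (swapGraph H (ι u) (ι v) (ι w)) (ι u) < cSum H (ι u)

/-- Optimistic unhappiness w.r.t. the MAX-cost via the edge swap `(v, w)`. -/
def OptUnhappyMaxVia {V : Type} (G : SimpleGraph V) (k : ℕ) (u v w : V) : Prop :=
  ValidSwap G k u v w ∧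
  ∃ (W : Type) (H : SimpleGraph W) (ι : V → W), Compatible G k u H ι ∧
    (swapGraph H (ι u) (ι v) (ι w)).Connected ∧
    cMax (swapGraph H (ι u) (ι v) (ι w)) (ι u) < cMax H (ι u)

/-- Sum-swap equilibrium for pessimistic players with `k`-local information. -/
def SumEquilibrium {V : Type} (G : SimpleGraph V) (k : ℕ) : Prop :=
  ∀ u : V, ¬ ∃ v w, UnhappySumVia G k u v w

/-- Max-swap equilibrium for pessimistic players with `k`-local information. -/
def MaxEquilibrium {V : Type} (G : SimpleGraph V) (k : ℕ) : Prop :=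
  ∀ u : V, ¬ ∃ v w, UnhappyMaxVia G k u v w

/-- Sum-swap equilibrium for weakly pessimistic players with `k`-local information. -/
def WeakSumEquilibrium {V : Type} (G : SimpleGraph V) (k : ℕ) : Prop :=
  ∀ u : V, ¬ ∃ v w, WeakUnhappySumVia G k u v w

/-- Max-swap equilibrium for weakly pessimistic players with `k`-local information. -/
def WeakMaxEquilibrium {V : Type} (G : SimpleGraph V) (k : ℕ) : Prop :=
  ∀ u : V, ¬ ∃ v w, WeakUnhappyMaxVia G k u v w

/-- Sum-swap equilibrium for optimistic players with `k`-local information. -/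
def OptSumEquilibrium {V : Type} (G : SimpleGraph V) (k : ℕ) : Prop :=
  ∀ u : V, ¬ ∃ v w, OptUnhappySumVia G k u v w

/-- Max-swap equilibrium for optimistic players with `k`-local information. -/
def OptMaxEquilibrium {V : Type} (G : SimpleGraph V) (k : ℕ) : Prop :=
  ∀ u : V, ¬ ∃ v w, OptUnhappyMaxVia G k u v w

/-- Social SUM-cost of a (connected, finite) graph, as a natural number. -/
noncomputable def scSum {W : Type} [Fintype W] (H : SimpleGraph W) : ℕ :=
  ∑ u : W, ∑ v : W, H.dist u v

/-- Social MAX-cost of a (connected, finite) graph, as a natural number. -/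
noncomputable def scMax {W : Type} [Fintype W] (H : SimpleGraph W) : ℕ :=
  ∑ u : W, Finset.univ.sup (H.dist u)

/-- Price of anarchy over `n`-vertex trees for a given notion of equilibrium and
social cost: (max social cost of an equilibrium tree) / (min social cost of a tree). -/
noncomputable def PoA (n : ℕ) (eqPred : SimpleGraph (Fin n) → Prop)
    (sc : SimpleGraph (Fin n) → ℕ) : ℚ :=
  ((sSup {m : ℕ | ∃ T : SimpleGraph (Fin n), T.IsTree ∧ eqPred T ∧ sc T = m} : ℕ) : ℚ) /
  ((sInf {m : ℕ | ∃ T : SimpleGraph (Fin n), T.IsTree ∧ sc T = m} : ℕ) : ℚ)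

lemma two_le_enat {x : ℕ∞} (h0 : x ≠ 0) (h1 : x ≠ 1) : 2 ≤ x := by
  cases x using ENat.recTopCoe with
  | top => exact le_top
  | coe n =>
    have h0' : n ≠ 0 := by exact_mod_cast h0
    have h1' : n ≠ 1 := by exact_mod_cast h1
    exact_mod_cast Nat.two_le_iff n |>.mpr ⟨h0', h1'⟩

lemma one_le_edist {W : Type} (H : SimpleGraph W) {a b : W} (h : b ≠ a) :
    1 ≤ H.edist a b :=
  Order.one_le_iff_pos.mpr (H.edist_pos_of_ne (Ne.symm h))

lemma swapGraph_adj_imp {W : Type} (H : SimpleGraph W) (u v w x : W)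
    (hx : (swapGraph H u v w).Adj u x) : x = w ∨ H.Adj u x := by
  rw [swapGraph, SimpleGraph.fromEdgeSet_adj] at hx
  rcases hx.1 with h | h
  · exact Or.inr (H.mem_edgeSet.mp h.1)
  · simp only [Set.mem_singleton_iff, Sym2.congr_right] at h
    exact Or.inl h

lemma swapGraph_not_adj_v {W : Type} (H : SimpleGraph W) (u v w : W)
    (hvw : v ≠ w) : ¬ (swapGraph H u v w).Adj u v := by
  rw [swapGraph, SimpleGraph.fromEdgeSet_adj]
  rintro ⟨h | h, -⟩
  · exact h.2 rfl
  · simp only [Set.mem_singleton_iff, Sym2.congr_right] at h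
    exact hvw h

/-- Key cost lemma: if every vertex of `H` is within distance 2 of `u`, then an edge swap
`(v, w)` at `u` cannot decrease `u`'s SUM-cost. -/
lemma cost_le {W : Type} [Fintype W] (H : SimpleGraph W) (u v w : W)
    (hball : ∀ x, H.edist u x ≤ 2)
    (hadj : H.Adj u v) (hnadj : ¬ H.Adj u w) (hwu : w ≠ u) :
    cSum H u ≤ cSum (swapGraph H u v w) u := by
  classical
  set H' := swapGraph H u v w with hH'
  have hvw : v ≠ w := fun h => hnadj (h ▸ hadj)
  have hvu : v ≠ u := hadj.ne'
  -- values at v and w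
  have hfv : H.edist u v = 1 := SimpleGraph.edist_eq_one_iff_adj.mpr hadj
  have hfw : H.edist u w ≤ 2 := hball w
  have hgv : 2 ≤ H'.edist u v := by
    refine two_le_enat (fun h => hvu (SimpleGraph.edist_eq_zero_iff.mp h).symm) (fun h => ?_)
    exact swapGraph_not_adj_v H u v w hvw (SimpleGraph.edist_eq_one_iff_adj.mp h)
  have hgw : 1 ≤ H'.edist u w := one_le_edist H' hwu
  have hrest : ∀ x, x ≠ v → x ≠ w → H.edist u x ≤ H'.edist u x := by
    intro x hxv hxw
    by_cases hxu : x = u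
    · subst hxu; simp [SimpleGraph.edist_self]
    · by_cases hax : H.Adj u x
      · rw [SimpleGraph.edist_eq_one_iff_adj.mpr hax]
        exact one_le_edist H' hxu
      · refine le_trans (hball x) (two_le_enat
          (fun h => hxu (SimpleGraph.edist_eq_zero_iff.mp h).symm) (fun h => ?_))
        rcases swapGraph_adj_imp H u v w x (SimpleGraph.edist_eq_one_iff_adj.mp h) with h' | h'
        · exact hxw h'
        · exact hax h'
  -- sum them up
  rw [cSum, cSum, tsum_fintype, tsum_fintype]
  have hwmem : w ∈ Finset.univ.erase v := Finset.mem_erase.mpr ⟨(Ne.symm hvw), Finset.mem_univ w⟩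
  rw [← Finset.add_sum_erase _ _ (Finset.mem_univ v), ← Finset.add_sum_erase _ _ hwmem,
    ← Finset.add_sum_erase _ (fun x => H'.edist u x) (Finset.mem_univ v),
    ← Finset.add_sum_erase _ (fun x => H'.edist u x) hwmem, ← add_assoc, ← add_assoc]
  refine add_le_add ?_ (Finset.sum_le_sum fun x hx => ?_)
  · calc H.edist u v + H.edist u w ≤ 1 + 2 := by rw [hfv]; exact add_le_add le_rfl hfw
      _ = 2 + 1 := by norm_num
      _ ≤ H'.edist u v + H'.edist u w := add_le_add hgv hgw
  · simp only [Finset.mem_erase] at hx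
    exact hrest x hx.2.1 hx.1

lemma edist_ball_le {V : Type} (G : SimpleGraph V) (u : V)
    (hu : u ∈ ball G u 2) (x : {y : V // y ∈ ball G u 2}) :
    (G.comap (Subtype.val : {y : V // y ∈ ball G u 2} → V)).edist ⟨u, hu⟩ x ≤ 2 := by
  have hx : G.edist u x.1 ≤ 2 := x.2
  have hne : G.edist u x.1 ≠ ⊤ := fun h => by simp [h] at hx
  obtain ⟨p, hp⟩ := SimpleGraph.exists_walk_of_edist_ne_top hne
  have hplen : (p.length : ℕ∞) ≤ 2 := by rw [hp]; exact hx
  have hplen' : p.length ≤ 2 := by exact_mod_cast hplen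
  set H := G.comap (Subtype.val : {y : V // y ∈ ball G u 2} → V) with hH
  interval_cases h : p.length
  · -- length 0 : x = u
    have : u = x.1 := SimpleGraph.Walk.eq_of_length_eq_zero h
    have : x = ⟨u, hu⟩ := Subtype.ext this.symm
    rw [this]; simp [SimpleGraph.edist_self]
  · -- length 1 : adjacent
    have hadj : G.Adj u x.1 := by
      have := p.adj_getVert_succ (by omega : 0 < p.length)
      rwa [p.getVert_zero, show (0 + 1 : ℕ) = p.length by omega, p.getVert_length] at this
    have : H.Adj ⟨u, hu⟩ x := by rw [hH, SimpleGraph.comap_adj]; exact hadj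
    calc H.edist ⟨u, hu⟩ x ≤ 1 := by
          rw [← SimpleGraph.edist_eq_one_iff_adj.mpr this]
      _ ≤ 2 := by norm_num
  · -- length 2 : midpoint
    set m := p.getVert 1 with hm
    have hadj1 : G.Adj u m := by
      have := p.adj_getVert_succ (by omega : 0 < p.length)
      rwa [p.getVert_zero] at this
    have hadj2 : G.Adj m x.1 := by
      have := p.adj_getVert_succ (by omega : 1 < p.length)
      rwa [show (1 + 1 : ℕ) = p.length by omega, p.getVert_length] at this
    have hmball : m ∈ ball G u 2 := by
      show G.edist u m ≤ 2
      calc G.edist u m = 1 := SimpleGraph.edist_eq_one_iff_adj.mpr hadj1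
        _ ≤ 2 := by norm_num
    have h1 : H.Adj ⟨u, hu⟩ ⟨m, hmball⟩ := by rw [hH, SimpleGraph.comap_adj]; exact hadj1
    have h2 : H.Adj ⟨m, hmball⟩ x := by rw [hH, SimpleGraph.comap_adj]; exact hadj2
    have := SimpleGraph.edist_le (SimpleGraph.Walk.cons h1 (SimpleGraph.Walk.cons h2
      SimpleGraph.Walk.nil))
    simpa using this

/-- Main lemma: for `k ∈ {1, 2}`, no player is pessimistically unhappy w.r.t. the SUM-cost. -/
lemma not_unhappy {V : Type} [Fintype V] (G : SimpleGraph V)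
    (k : ℕ) (hk : k = 1 ∨ k = 2) :
    ∀ u : V, ¬ ∃ v w, UnhappySumVia G k u v w := by
  rintro u ⟨v, w, ⟨⟨hadj, hwk, hnadj, hwu⟩, hall⟩⟩
  rcases hk with hk | hk
  · -- k = 1 : no valid swap exists
    subst hk
    have h0 : G.edist u w ≠ 0 := fun h => hwu (SimpleGraph.edist_eq_zero_iff.mp h).symm
    have h1 : G.edist u w = 1 := le_antisymm (by exact_mod_cast hwk)
      (Order.one_le_iff_pos.mpr (pos_iff_ne_zero.mpr h0))
    exact hnadj (SimpleGraph.edist_eq_one_iff_adj.mp h1)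
  · -- k = 2 : use the ball itself as the compatible graph
    subst hk
    have hu : u ∈ ball G u 2 := by
      show G.edist u u ≤ 2; simp [SimpleGraph.edist_self]
    have hv : v ∈ ball G u 2 := by
      show G.edist u v ≤ 2
      calc G.edist u v = 1 := SimpleGraph.edist_eq_one_iff_adj.mpr hadj
        _ ≤ 2 := by norm_num
    have hw : w ∈ ball G u 2 := by exact_mod_cast hwk
    set W := {y : V // y ∈ ball G u 2} with hW
    set H := G.comap (Subtype.val : W → V) with hH
    haveI : Finite W := Subtype.finite
    haveI : Fintype W := Fintype.ofFinite W
    classical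
    set ι : V → W := fun x => if h : x ∈ ball G u 2 then ⟨x, h⟩ else ⟨u, hu⟩ with hι
    have hιball : ∀ a (ha : a ∈ ball G u 2), ι a = ⟨a, ha⟩ := by
      intro a ha; simp [hι, dif_pos ha]
    have hedist : ∀ x : W, H.edist (ι u) x ≤ 2 := by
      intro x; rw [hιball u hu]; exact edist_ball_le G u hu x
    have hcompat : Compatible G 2 u H ι := by
      refine ⟨inferInstance, ?_, ?_, ?_, ?_⟩
      · -- connected
        haveI : Nonempty W := ⟨⟨u, hu⟩⟩
        refine SimpleGraph.Connected.mk (fun x y => ?_)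
        have hx : H.Reachable (ι u) x := SimpleGraph.reachable_of_edist_ne_top
          (fun h => absurd (hedist x) (by simp [h]))
        have hy : H.Reachable (ι u) y := SimpleGraph.reachable_of_edist_ne_top
          (fun h => absurd (hedist y) (by simp [h]))
        exact hx.symm.trans hy
      · -- injective on ball
        intro a ha b hb h
        rw [hιball a ha, hιball b hb] at h
        exact congrArg Subtype.val h
      · -- ball condition
        apply Set.eq_of_subset_of_subset
        · intro x _
          exact ⟨x.1, x.2, (hιball x.1 x.2).trans (Subtype.ext rfl)⟩
        · intro x _
          exact hedist x
      · -- adjacency condition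
        intro a ha b hb
        rw [hιball a ha, hιball b hb, hH, SimpleGraph.comap_adj]
    have hlt := hall W H ι hcompat
    have hle : cSum H (ι u) ≤ cSum (swapGraph H (ι u) (ι v) (ι w)) (ι u) := by
      refine cost_le H (ι u) (ι v) (ι w) hedist ?_ ?_ ?_
      · rw [hιball u hu, hιball v hv, hH, SimpleGraph.comap_adj]; exact hadj
      · rw [hιball u hu, hιball w hw, hH, SimpleGraph.comap_adj]; exact hnadj
      · rw [hιball u hu, hιball w hw]
        exact fun h => hwu (congrArg Subtype.val h)
    exact absurd hlt (not_lt.mpr hle)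

theorem stmt0 {V : Type} [Fintype V] (G : SimpleGraph V) (hG : G.Connected)
    (k : ℕ) (hk : k = 1 ∨ k = 2) :
    (∀ u : V, ¬ ∃ v w, UnhappySumVia G k u v w) ∧ SumEquilibrium G k :=
  ⟨not_unhappy G k hk, not_unhappy G k hk⟩

end SwapGame
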